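/- arXiv:1202.1237 — 2 statements merged into one kernel-verified Lean document; each statement's English description precedes it below -/
import Mathlib

section
/- For every nonnegative integer n and variable x, the Legendre polynomial satisfies P_{2n+1}(x) = x \sum_{k=0}^{n} \binom{n}{k} \binom{-3/2 - n}{k} (1 - x^2)^k. -/
open Polynomial Finset

/-- The Legendre polynomials over `ℚ`, defined by the three-term recurrence
`P₀ = 1`, `P₁ = X`, `(n+2)·P_{n+2} = (2n+3)·X·P_{n+1} - (n+1)·P_n`. -/
noncomputable def legendreP : ℕ → Polynomial ℚ
  | 0 => 1
  | 1 => X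
  | n + 2 => C ((n + 2 : ℚ))⁻¹ *
      (C (2 * (n : ℚ) + 3) * X * legendreP (n + 1) - C ((n : ℚ) + 1) * legendreP n)

/-- The generalized binomial coefficient `a(a-1)⋯(a-k+1)/k!`. -/
def gchoose (a : ℚ) (k : ℕ) : ℚ :=
  (∏ i ∈ Finset.range k, (a - i)) / (Nat.factorial k)

lemma gchoose_zero (a : ℚ) : gchoose a 0 = 1 := by simp [gchoose]

lemma gchoose_succ (a : ℚ) (k : ℕ) :
    gchoose a (k+1) * (k+1) = gchoose a k * (a - k) := by
  have h : (Nat.factorial k : ℚ) ≠ 0 := by positivity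
  have h2 : ((k:ℚ)+1) ≠ 0 := by positivity
  simp only [gchoose, Finset.prod_range_succ, Nat.factorial_succ]
  push_cast
  field_simp

lemma gchoose_shift (a : ℚ) (ha : a ≠ 0) (k : ℕ) :
    gchoose (a-1) k * a = gchoose a k * (a - k) := by
  have h : (Nat.factorial k : ℚ) ≠ 0 := by positivity
  have key : (∏ i ∈ Finset.range k, (a - 1 - i)) * a
      = (∏ i ∈ Finset.range k, (a - i)) * (a - k) := by
    have h1 := Finset.prod_range_succ (fun i => a - i) k
    have h2 := Finset.prod_range_succ' (fun i => a - i) k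
    rw [h1] at h2
    have h3 : ∏ i ∈ Finset.range k, (a - ((i:ℕ):ℚ) - 1)
        = ∏ i ∈ Finset.range k, (a - 1 - (i:ℚ)) :=
      Finset.prod_congr rfl (fun i _ => by ring)
    simp only [Nat.cast_add, Nat.cast_one, Nat.cast_zero, sub_zero, sub_add_eq_sub_sub] at h2
    rw [h3] at h2
    rw [← h2]
  unfold gchoose
  field_simp
  linarith [key]

lemma choose_succ_cast (n k : ℕ) :
    ((n.choose (k+1) : ℚ)) * (k+1) = (n.choose k : ℚ) * ((n:ℚ) - k) := by
  rcases le_or_gt (k+1) n with h | h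
  · have := Nat.choose_succ_right_eq n k
    have hk : k ≤ n := by omega
    calc ((n.choose (k+1) : ℚ)) * (k+1) = ((n.choose (k+1) * (k+1) : ℕ) : ℚ) := by push_cast; ring
    _ = ((n.choose k * (n - k) : ℕ) : ℚ) := by rw [this]
    _ = (n.choose k : ℚ) * ((n:ℚ) - k) := by push_cast [Nat.cast_sub hk]; ring
  · rcases le_or_gt k n with h2 | h2
    · have hk : k = n := by omega
      subst hk; simp [Nat.choose_succ_self]
    · simp [Nat.choose_eq_zero_of_lt h2, Nat.choose_eq_zero_of_lt (by omega : n < k+1)]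

lemma choose_succ_succ_cast (n k : ℕ) :
    (((n+1).choose (k+1) : ℚ)) * (k+1) = (n.choose k : ℚ) * ((n:ℚ) + 1) := by
  rcases le_or_gt k n with h | h
  · have h1 := choose_succ_cast (n+1) k
    have h2 := Nat.choose_mul_succ_eq n k  -- n.choose k * (n+1) = (n+1).choose k * (n+1-k)
    rw [h1]
    have hk : k ≤ n+1 := by omega
    have : ((n+1).choose k : ℚ) * ((n:ℚ) + 1 - k) = (n.choose k : ℚ) * ((n:ℚ)+1) := by
      have := congrArg (fun m : ℕ => (m : ℚ)) h2
      push_cast [Nat.cast_sub hk] at this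
      linarith [this]
    push_cast
    linarith [this]
  · simp [Nat.choose_eq_zero_of_lt h, Nat.choose_eq_zero_of_lt (by omega : n+1 < k+1)]

lemma choose_sub_cast (n k : ℕ) :
    ((n:ℚ) + 1 - k) * (((n+1).choose k : ℚ)) = ((n:ℚ) + 1) * (n.choose k : ℚ) := by
  rcases le_or_gt k (n+1) with h | h
  · have h2 := Nat.choose_mul_succ_eq n k
    have := congrArg (fun m : ℕ => (m : ℚ)) h2
    push_cast [Nat.cast_sub h] at this
    linarith [this]
  · simp [Nat.choose_eq_zero_of_lt h, Nat.choose_eq_zero_of_lt (by omega : n < k)]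

lemma TI2 (n k : ℕ) :
    (2*(n:ℚ)+3) * (((n+1).choose k : ℚ)) * gchoose (-5/2 - (n:ℚ)) k
    = (4*(n:ℚ)+5) * (((n+1).choose k : ℚ)) * gchoose (-3/2 - (n:ℚ)) k
      - (2*(n:ℚ)+2) * ((n.choose k : ℚ)) * gchoose (-3/2 - (n:ℚ)) k := by
  set a : ℚ := -3/2 - (n:ℚ) with ha_def
  have ha : a ≠ 0 := by
    have : a < 0 := by
      have : (0:ℚ) ≤ (n:ℚ) := Nat.cast_nonneg n
      rw [ha_def]; linarith
    linarith
  have hshift := gchoose_shift a ha k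
  have hR6 := choose_sub_cast n k
  have h52 : -5/2 - (n:ℚ) = a - 1 := by rw [ha_def]; ring
  rw [h52]
  have key : a * ((2*(n:ℚ)+3) * (((n+1).choose k : ℚ)) * gchoose (a-1) k)
      = a * ((4*(n:ℚ)+5) * (((n+1).choose k : ℚ)) * gchoose a k
      - (2*(n:ℚ)+2) * ((n.choose k : ℚ)) * gchoose a k) := by
    linear_combination (2*(n:ℚ)+3) * (((n+1).choose k : ℚ)) * hshift
      + (2*(n:ℚ)+3) * gchoose a k * hR6
  exact mul_left_cancel₀ ha key

lemma TI1 (n k : ℕ) :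
    (2*(n:ℚ)+2) * (((n+1).choose (k+1) : ℚ)) * gchoose (-3/2 - (n:ℚ)) (k+1)
    - (4*(n:ℚ)+3) * ((n.choose (k+1) : ℚ)) * gchoose (-3/2 - (n:ℚ)) (k+1)
    + (2*(n:ℚ)+1) * ((n.choose (k+1) : ℚ)) * gchoose (-1/2 - (n:ℚ)) (k+1)
    = -(4*(n:ℚ)+3) * ((n.choose k : ℚ)) * gchoose (-3/2 - (n:ℚ)) k := by
  set b : ℚ := -1/2 - (n:ℚ) with hb_def
  have hb : b ≠ 0 := by
    have : (0:ℚ) ≤ (n:ℚ) := Nat.cast_nonneg n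
    have : b < 0 := by rw [hb_def]; linarith
    linarith
  have hk1 : ((k:ℚ)+1) ≠ 0 := by positivity
  have h32 : -3/2 - (n:ℚ) = b - 1 := by rw [hb_def]; ring
  rw [h32]
  have e_h1 : gchoose (b-1) (k+1) = gchoose (b-1) k * (b - 1 - k) / ((k:ℚ)+1) := by
    rw [eq_div_iff hk1]; exact gchoose_succ (b-1) k
  have e_g1 : gchoose b (k+1) = gchoose b k * (b - k) / ((k:ℚ)+1) := by
    rw [eq_div_iff hk1]; exact gchoose_succ b k
  have e_h : gchoose (b-1) k = gchoose b k * (b - k) / b := by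
    rw [eq_div_iff hb]; exact gchoose_shift b hb k
  have e_d1 : (n.choose (k+1) : ℚ) = (n.choose k : ℚ) * ((n:ℚ) - k) / ((k:ℚ)+1) := by
    rw [eq_div_iff hk1]; exact choose_succ_cast n k
  have e_c1 : ((n+1).choose (k+1) : ℚ) = (n.choose k : ℚ) * ((n:ℚ) + 1) / ((k:ℚ)+1) := by
    rw [eq_div_iff hk1]; exact choose_succ_succ_cast n k
  rw [e_h1, e_g1, e_h, e_d1, e_c1]
  field_simp
  rw [hb_def]
  ring

lemma I2 (n : ℕ) (u : ℚ) :
    (2*(n:ℚ)+3) * ∑ k ∈ range (n+2), (((n+1).choose k : ℚ)) * gchoose (-3/2 - ((n:ℚ)+1)) k * u^k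
    = (4*(n:ℚ)+5) * ∑ k ∈ range (n+2), (((n+1).choose k : ℚ)) * gchoose (-1/2 - ((n:ℚ)+1)) k * u^k
      - (2*(n:ℚ)+2) * ∑ k ∈ range (n+1), ((n.choose k : ℚ)) * gchoose (-3/2 - (n:ℚ)) k * u^k := by
  rw [show -3/2 - ((n:ℚ)+1) = -5/2 - (n:ℚ) from by ring,
      show -1/2 - ((n:ℚ)+1) = -3/2 - (n:ℚ) from by ring]
  have hch : (n.choose (n+1) : ℚ) = 0 := by
    simp [Nat.choose_eq_zero_of_lt (Nat.lt_succ_self n)]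
  have hext : ∑ k ∈ range (n+2), ((n.choose k : ℚ)) * gchoose (-3/2 - (n:ℚ)) k * u^k
      = ∑ k ∈ range (n+1), ((n.choose k : ℚ)) * gchoose (-3/2 - (n:ℚ)) k * u^k := by
    rw [Finset.sum_range_succ, hch]; ring
  rw [← hext, Finset.mul_sum, Finset.mul_sum, Finset.mul_sum, ← Finset.sum_sub_distrib]
  exact Finset.sum_congr rfl (fun k _ => by linear_combination u^k * TI2 n k)

lemma I1 (n : ℕ) (u : ℚ) :
    (2*(n:ℚ)+2) * ∑ k ∈ range (n+2), (((n+1).choose k : ℚ)) * gchoose (-1/2 - ((n:ℚ)+1)) k * u^k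
    = (4*(n:ℚ)+3) * (1-u) * ∑ k ∈ range (n+1), ((n.choose k : ℚ)) * gchoose (-3/2 - (n:ℚ)) k * u^k
      - (2*(n:ℚ)+1) * ∑ k ∈ range (n+1), ((n.choose k : ℚ)) * gchoose (-1/2 - (n:ℚ)) k * u^k := by
  rw [show -1/2 - ((n:ℚ)+1) = -3/2 - (n:ℚ) from by ring]
  have hch : (n.choose (n+1) : ℚ) = 0 := by
    simp [Nat.choose_eq_zero_of_lt (Nat.lt_succ_self n)]
  have hexpand : (1-u) * ∑ k ∈ range (n+1), ((n.choose k : ℚ)) * gchoose (-3/2 - (n:ℚ)) k * u^k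
      = (∑ k ∈ range (n+1), ((n.choose k : ℚ)) * gchoose (-3/2 - (n:ℚ)) k * u^k)
        - ∑ k ∈ range (n+1), ((n.choose k : ℚ)) * gchoose (-3/2 - (n:ℚ)) k * u^(k+1) := by
    rw [sub_mul, one_mul, Finset.mul_sum]
    congr 1
    exact Finset.sum_congr rfl (fun k _ => by ring)
  have key : (2*(n:ℚ)+2) * (∑ k ∈ range (n+2), (((n+1).choose k : ℚ)) * gchoose (-3/2 - (n:ℚ)) k * u^k)
      - (4*(n:ℚ)+3) * (∑ k ∈ range (n+1), ((n.choose k : ℚ)) * gchoose (-3/2 - (n:ℚ)) k * u^k)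
      + (2*(n:ℚ)+1) * (∑ k ∈ range (n+1), ((n.choose k : ℚ)) * gchoose (-1/2 - (n:ℚ)) k * u^k)
      = -(4*(n:ℚ)+3) * ∑ k ∈ range (n+1), ((n.choose k : ℚ)) * gchoose (-3/2 - (n:ℚ)) k * u^(k+1) := by
    have e1 : ∑ k ∈ range (n+2), ((n.choose k : ℚ)) * gchoose (-3/2 - (n:ℚ)) k * u^k
        = ∑ k ∈ range (n+1), ((n.choose k : ℚ)) * gchoose (-3/2 - (n:ℚ)) k * u^k := by
      rw [Finset.sum_range_succ, hch]; ring
    have e2 : ∑ k ∈ range (n+2), ((n.choose k : ℚ)) * gchoose (-1/2 - (n:ℚ)) k * u^k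
        = ∑ k ∈ range (n+1), ((n.choose k : ℚ)) * gchoose (-1/2 - (n:ℚ)) k * u^k := by
      rw [Finset.sum_range_succ, hch]; ring
    rw [← e1, ← e2, Finset.mul_sum, Finset.mul_sum, Finset.mul_sum, ← Finset.sum_sub_distrib,
        ← Finset.sum_add_distrib]
    rw [Finset.sum_range_succ' (fun k =>
      (2*(n:ℚ)+2) * ((((n+1).choose k : ℚ)) * gchoose (-3/2 - (n:ℚ)) k * u^k)
      - (4*(n:ℚ)+3) * (((n.choose k : ℚ)) * gchoose (-3/2 - (n:ℚ)) k * u^k)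
      + (2*(n:ℚ)+1) * (((n.choose k : ℚ)) * gchoose (-1/2 - (n:ℚ)) k * u^k)) (n+1)]
    have h0 : (2*(n:ℚ)+2) * ((((n+1).choose 0 : ℚ)) * gchoose (-3/2 - (n:ℚ)) 0 * u^0)
      - (4*(n:ℚ)+3) * (((n.choose 0 : ℚ)) * gchoose (-3/2 - (n:ℚ)) 0 * u^0)
      + (2*(n:ℚ)+1) * (((n.choose 0 : ℚ)) * gchoose (-1/2 - (n:ℚ)) 0 * u^0) = 0 := by
      simp [gchoose_zero]; ring
    rw [h0, add_zero, Finset.mul_sum]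
    exact Finset.sum_congr rfl (fun k _ => by linear_combination u^(k+1) * TI1 n k)
  linear_combination key - (4*(n:ℚ)+3) * hexpand

lemma legendre_rec (m : ℕ) : legendreP (m+2) = C ((m + 2 : ℚ))⁻¹ *
      (C (2 * (m : ℚ) + 3) * X * legendreP (m + 1) - C ((m : ℚ) + 1) * legendreP m) := rfl

lemma legendre_pair (n : ℕ) :
    (∀ x : ℚ, (legendreP (2*n)).eval x
      = ∑ k ∈ range (n+1), (n.choose k : ℚ) * gchoose (-1/2 - (n:ℚ)) k * (1 - x^2)^k) ∧
    (∀ x : ℚ, (legendreP (2*n+1)).eval x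
      = x * ∑ k ∈ range (n+1), (n.choose k : ℚ) * gchoose (-3/2 - (n:ℚ)) k * (1 - x^2)^k) := by
  induction n with
  | zero =>
    constructor <;> intro x <;> simp [legendreP, gchoose_zero]
  | succ n ih =>
    obtain ⟨ihE, ihO⟩ := ih
    have h2n2 : ((2*n : ℕ) : ℚ) = 2*(n:ℚ) := by push_cast; ring
    have hE : ∀ x : ℚ, (legendreP (2*(n+1))).eval x
        = ∑ k ∈ range (n+2), ((n+1).choose k : ℚ) * gchoose (-1/2 - ((n:ℚ)+1)) k * (1 - x^2)^k := by
      intro x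
      have hm : 2*(n+1) = (2*n)+2 := by ring
      rw [hm, legendre_rec (2*n)]
      simp only [eval_mul, eval_sub, eval_C, eval_X, ihE x, ihO x]
      have h1 := I1 n (1 - x^2)
      have hne : ((2*n : ℕ) : ℚ) + 2 ≠ 0 := by positivity
      rw [inv_mul_eq_div, div_eq_iff hne]
      push_cast
      push_cast at h1
      linear_combination -h1
    have hO : ∀ x : ℚ, (legendreP (2*(n+1)+1)).eval x
        = x * ∑ k ∈ range (n+2), ((n+1).choose k : ℚ) * gchoose (-3/2 - ((n:ℚ)+1)) k * (1 - x^2)^k := by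
      intro x
      have hm : 2*(n+1)+1 = (2*n+1)+2 := by ring
      rw [hm, legendre_rec (2*n+1)]
      simp only [eval_mul, eval_sub, eval_C, eval_X, ihO x]
      have hE' := hE x
      rw [show (2*n+1)+1 = 2*(n+1) from by ring, hE'] -- ?
      have h2 := I2 n (1 - x^2)
      have hne : ((2*n+1 : ℕ) : ℚ) + 2 ≠ 0 := by positivity
      rw [inv_mul_eq_div, div_eq_iff hne]
      push_cast
      push_cast at h2
      linear_combination -x * h2
    refine ⟨?_, ?_⟩ <;> intro x
    · rw [hE x]; push_cast; ring_nf
    · rw [hO x]; push_cast; ring_nf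

theorem legendre_odd_sum (n : ℕ) (x : ℚ) :
    (legendreP (2 * n + 1)).eval x =
      x * ∑ k ∈ Finset.range (n + 1),
        (n.choose k : ℚ) * gchoose (-3/2 - (n : ℚ)) k * (1 - x ^ 2) ^ k := by
  exact (legendre_pair n).2 x
end

section
/- Let p be an odd prime and let a, t be p-integral rational numbers with t \not\equiv 0, 1 (mod p). Let \langle a \rangle_p be the residue of a in {0,...,p-1}. Then \sum_{k=0}^{p-1} \binom{a}{k}^2 t^k \equiv t^{\langle a \rangle_p} \sum_{k=0}^{p-1} \binom{a}{k}^2 t^{-k} (mod p). -/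
/-- A rational number is `p`-integral if `p` does not divide its denominator. -/
def pInt (p : ℕ) (r : ℚ) : Prop := ¬ (p ∣ r.den)

/-- Congruence modulo `p` in the ring of `p`-integral rationals:
`r ≡ s (mod p)` iff `r - s = p·c` for some `p`-integral rational `c`. -/
def pCong (p : ℕ) (r s : ℚ) : Prop := ∃ c : ℚ, pInt p c ∧ r - s = p * c

section Aux

variable {p : ℕ} [hfp : Fact p.Prime]

lemma pInt_iff {r : ℚ} : pInt p r ↔ ((r.den : ZMod p) ≠ 0) := by
  rw [Ne, ZMod.natCast_eq_zero_iff]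
  rfl

lemma pInt_natCast (n : ℕ) : pInt p (n : ℚ) := by
  rw [pInt, Rat.den_natCast, Nat.dvd_one]
  exact hfp.out.ne_one

lemma pInt_of_dvd {r : ℚ} {m : ℕ} (h : r.den ∣ m) (hm : ¬ p ∣ m) : pInt p r :=
  fun hd => hm (hd.trans h)

lemma pInt.add {r s : ℚ} (hr : pInt p r) (hs : pInt p s) : pInt p (r + s) := by
  refine pInt_of_dvd (Rat.add_den_dvd r s) ?_
  intro h
  rcases (Nat.Prime.dvd_mul hfp.out).mp h with h | h
  exacts [hr h, hs h]

lemma pInt.mul {r s : ℚ} (hr : pInt p r) (hs : pInt p s) : pInt p (r * s) := by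
  refine pInt_of_dvd (Rat.mul_den_dvd r s) ?_
  intro h
  rcases (Nat.Prime.dvd_mul hfp.out).mp h with h | h
  exacts [hr h, hs h]

lemma pInt.neg {r : ℚ} (hr : pInt p r) : pInt p (-r) := by
  simpa [pInt, Rat.neg_den] using hr

lemma pInt.sub {r s : ℚ} (hr : pInt p r) (hs : pInt p s) : pInt p (r - s) := by
  rw [sub_eq_add_neg]; exact hr.add hs.neg

lemma pInt.pow {r : ℚ} (hr : pInt p r) (k : ℕ) : pInt p (r ^ k) := by
  induction k with
  | zero => simpa using pInt_natCast 1
  | succ k ih => rw [pow_succ]; exact ih.mul hr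

lemma pInt_prod {ι : Type*} {s : Finset ι} {f : ι → ℚ} (h : ∀ i ∈ s, pInt p (f i)) :
    pInt p (∏ i ∈ s, f i) := by
  classical
  induction s using Finset.induction_on with
  | empty => simpa using pInt_natCast 1
  | @insert x s hx ih =>
    rw [Finset.prod_insert hx]
    exact (h _ (Finset.mem_insert_self _ _)).mul
      (ih fun i hi => h i (Finset.mem_insert_of_mem hi))

lemma pInt_sum {ι : Type*} {s : Finset ι} {f : ι → ℚ} (h : ∀ i ∈ s, pInt p (f i)) :
    pInt p (∑ i ∈ s, f i) := by
  classical
  induction s using Finset.induction_on with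
  | empty => simpa using pInt_natCast 0
  | @insert x s hx ih =>
    rw [Finset.sum_insert hx]
    exact (h _ (Finset.mem_insert_self _ _)).add
      (ih fun i hi => h i (Finset.mem_insert_of_mem hi))

lemma cast_add' {r s : ℚ} (hr : pInt p r) (hs : pInt p s) :
    ((r + s : ℚ) : ZMod p) = (r : ZMod p) + (s : ZMod p) :=
  Rat.cast_add_of_ne_zero (pInt_iff.mp hr) (pInt_iff.mp hs)

lemma cast_mul' {r s : ℚ} (hr : pInt p r) (hs : pInt p s) :
    ((r * s : ℚ) : ZMod p) = (r : ZMod p) * (s : ZMod p) :=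
  Rat.cast_mul_of_ne_zero (pInt_iff.mp hr) (pInt_iff.mp hs)

lemma cast_sub' {r s : ℚ} (hr : pInt p r) (hs : pInt p s) :
    ((r - s : ℚ) : ZMod p) = (r : ZMod p) - (s : ZMod p) :=
  Rat.cast_sub_of_ne_zero (pInt_iff.mp hr) (pInt_iff.mp hs)

lemma cast_pow' {r : ℚ} (hr : pInt p r) (k : ℕ) :
    ((r ^ k : ℚ) : ZMod p) = (r : ZMod p) ^ k := by
  induction k with
  | zero => simp
  | succ k ih => rw [pow_succ, pow_succ, cast_mul' (hr.pow k) hr, ih]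

lemma cast_sum' {ι : Type*} {s : Finset ι} {f : ι → ℚ} (h : ∀ i ∈ s, pInt p (f i)) :
    ((∑ i ∈ s, f i : ℚ) : ZMod p) = ∑ i ∈ s, ((f i : ℚ) : ZMod p) := by
  classical
  induction s using Finset.induction_on with
  | empty => simp
  | @insert x s hx ih =>
    rw [Finset.sum_insert hx, Finset.sum_insert hx,
      cast_add' (h _ (Finset.mem_insert_self _ _))
        (pInt_sum fun i hi => h i (Finset.mem_insert_of_mem hi)),
      ih fun i hi => h i (Finset.mem_insert_of_mem hi)]

lemma cast_prod' {ι : Type*} {s : Finset ι} {f : ι → ℚ} (h : ∀ i ∈ s, pInt p (f i)) :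
    ((∏ i ∈ s, f i : ℚ) : ZMod p) = ∏ i ∈ s, ((f i : ℚ) : ZMod p) := by
  classical
  induction s using Finset.induction_on with
  | empty => simp
  | @insert x s hx ih =>
    rw [Finset.prod_insert hx, Finset.prod_insert hx,
      cast_mul' (h _ (Finset.mem_insert_self _ _))
        (pInt_prod fun i hi => h i (Finset.mem_insert_of_mem hi)),
      ih fun i hi => h i (Finset.mem_insert_of_mem hi)]

omit hfp in
lemma den_div_dvd' (a b : ℤ) : ((((a : ℚ) / (b : ℚ)).den : ℕ) : ℤ) ∣ b := by
  rw [← Rat.divInt_eq_div]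
  exact Rat.den_dvd a b

lemma cast_eq_zero_iff' {r : ℚ} (hr : pInt p r) :
    ((r : ZMod p) = 0) ↔ (p : ℤ) ∣ r.num := by
  rw [Rat.cast_def, div_eq_zero_iff]
  have hd : ((r.den : ZMod p)) ≠ 0 := pInt_iff.mp hr
  simp only [hd, or_false]
  exact ZMod.intCast_zmod_eq_zero_iff_dvd r.num p

lemma pCong_iff {r s : ℚ} (hr : pInt p r) (hs : pInt p s) :
    pCong p r s ↔ (r : ZMod p) = (s : ZMod p) := by
  constructor
  · rintro ⟨c, hc, hrs⟩
    have h1 := cast_sub' hr hs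
    rw [hrs, cast_mul' (pInt_natCast p) hc] at h1
    simp only [Rat.cast_natCast, ZMod.natCast_self, zero_mul] at h1
    exact sub_eq_zero.mp h1.symm
  · intro h
    have hd : pInt p (r - s) := hr.sub hs
    have hz : ((r - s : ℚ) : ZMod p) = 0 := by rw [cast_sub' hr hs, h, sub_self]
    obtain ⟨m, hm⟩ := (cast_eq_zero_iff' hd).mp hz
    have hp0 : (p : ℚ) ≠ 0 := by exact_mod_cast hfp.out.ne_zero
    set d := r - s with hddef
    have hden : ((d.den : ℚ)) ≠ 0 := Nat.cast_ne_zero.mpr (Rat.den_ne_zero _)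
    refine ⟨d / p, ?_, by rw [mul_comm, div_mul_cancel₀ _ hp0]⟩
    have hq : (d.num : ℚ) = d * (d.den : ℚ) := by
      calc (d.num : ℚ) = (d.num : ℚ) / (d.den : ℚ) * (d.den : ℚ) :=
            (div_mul_cancel₀ _ hden).symm
        _ = d * (d.den : ℚ) := by rw [Rat.num_div_den]
    have key : d / (p : ℚ) = (m : ℚ) / ((d.den : ℕ) : ℚ) := by
      rw [div_eq_div_iff hp0 hden, ← hq, hm]
      push_cast
      ring
    have hdvd : (d / (p : ℚ)).den ∣ d.den := by
      rw [key]
      exact_mod_cast den_div_dvd' m (d.den : ℤ)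
    exact pInt_of_dvd hdvd hd

lemma pInt_gchoose {a : ℚ} (ha : pInt p a) {k : ℕ} (hk : k < p) :
    pInt p (gchoose a k) := by
  have h1 : pInt p ((1 : ℚ) / (Nat.factorial k : ℚ)) := by
    refine pInt_of_dvd (m := Nat.factorial k) ?_ ?_
    · have h2 : (1 : ℚ) / ((Nat.factorial k : ℕ) : ℚ)
          = ((1 : ℤ) : ℚ) / (((Nat.factorial k : ℕ) : ℤ) : ℚ) := by push_cast; ring
      rw [h2]
      exact_mod_cast den_div_dvd' 1 ((Nat.factorial k : ℕ) : ℤ)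
    · intro hdvd
      exact absurd ((Nat.Prime.dvd_factorial hfp.out).mp hdvd) (Nat.not_le.mpr hk)
  have h2 : pInt p (∏ i ∈ Finset.range k, (a - i)) :=
    pInt_prod fun i _ => ha.sub (pInt_natCast i)
  have h3 : gchoose a k = (∏ i ∈ Finset.range k, (a - i)) * ((1:ℚ) / (Nat.factorial k : ℚ)) := by
    rw [gchoose]; ring
  rw [h3]
  exact h2.mul h1

lemma cast_gchoose {a : ℚ} (ha : pInt p a) {n : ℕ} (han : (a : ZMod p) = (n : ZMod p))
    {k : ℕ} (hk : k < p) :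
    ((gchoose a k : ℚ) : ZMod p) = (n.choose k : ZMod p) := by
  have hfac : ((Nat.factorial k : ℕ) : ZMod p) ≠ 0 := by
    rw [Ne, ZMod.natCast_eq_zero_iff, Nat.Prime.dvd_factorial hfp.out]
    exact Nat.not_le.mpr hk
  have h2 : pInt p (∏ i ∈ Finset.range k, (a - i)) :=
    pInt_prod fun i _ => ha.sub (pInt_natCast i)
  have hnum : (((Nat.factorial k : ℚ)).num : ZMod p) ≠ 0 := by
    rw [Rat.num_natCast]
    exact_mod_cast hfac
  rw [gchoose, Rat.cast_div_of_ne_zero (pInt_iff.mp h2) hnum,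
    cast_prod' (fun i _ => ha.sub (pInt_natCast i))]
  have hprod : ∀ i ∈ Finset.range k, ((a - (i : ℚ) : ℚ) : ZMod p)
      = ((n : ZMod p) - (i : ZMod p)) := by
    intro i _
    rw [cast_sub' ha (pInt_natCast i), han, Rat.cast_natCast]
  rw [Finset.prod_congr rfl hprod, Rat.cast_natCast]
  rcases le_or_gt k n with h | h
  · have hdesc : ∏ i ∈ Finset.range k, ((n : ZMod p) - (i : ZMod p))
        = ((n.descFactorial k : ℕ) : ZMod p) := by
      rw [Nat.descFactorial_eq_prod_range, Nat.cast_prod]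
      refine Finset.prod_congr rfl fun i hi => ?_
      rw [Nat.cast_sub (le_trans (Nat.le_of_lt_succ (Nat.lt_succ_of_lt
        (Finset.mem_range.mp hi))) h)]
    rw [hdesc, Nat.descFactorial_eq_factorial_mul_choose, Nat.cast_mul,
      mul_comm, mul_div_assoc, div_self hfac, mul_one]
  · have hmem : n ∈ Finset.range k := Finset.mem_range.mpr h
    rw [Finset.prod_eq_zero hmem (by ring), Nat.choose_eq_zero_of_lt h]
    simp

lemma cast_num_ne_zero {t : ℚ} (ht0 : (t : ZMod p) ≠ 0) : ((t.num : ℤ) : ZMod p) ≠ 0 := by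
  intro h
  exact ht0 (by rw [Rat.cast_def, h, zero_div])

lemma cast_one_div {t : ℚ} (ht0 : (t : ZMod p) ≠ 0) :
    (((1 : ℚ) / t : ℚ) : ZMod p) = ((t : ZMod p))⁻¹ := by
  rw [one_div, Rat.cast_inv_of_ne_zero (cast_num_ne_zero ht0)]

lemma pInt_one_div {t : ℚ} (ht0 : (t : ZMod p) ≠ 0) : pInt p ((1 : ℚ) / t) := by
  have htne : t ≠ 0 := by rintro rfl; simp at ht0
  have hnum : ¬ (p : ℤ) ∣ t.num :=
    fun h => cast_num_ne_zero ht0 ((ZMod.intCast_zmod_eq_zero_iff_dvd t.num p).mpr h)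
  have hnumQ : ((t.num : ℤ) : ℚ) ≠ 0 := by
    exact_mod_cast Rat.num_ne_zero.mpr htne
  have hden : ((t.den : ℚ)) ≠ 0 := Nat.cast_ne_zero.mpr (Rat.den_ne_zero _)
  have hq : (t.num : ℚ) = t * (t.den : ℚ) := by
    calc (t.num : ℚ) = (t.num : ℚ) / (t.den : ℚ) * (t.den : ℚ) :=
          (div_mul_cancel₀ _ hden).symm
      _ = t * (t.den : ℚ) := by rw [Rat.num_div_den]
  refine pInt_of_dvd (m := t.num.natAbs) ?_ ?_
  · have h1 : (1 : ℚ) / t = (((t.den : ℕ) : ℤ) : ℚ) / ((t.num : ℤ) : ℚ) := by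
      rw [div_eq_div_iff htne hnumQ, one_mul]
      push_cast
      rw [hq]
      ring
    rw [h1]
    have h2 := den_div_dvd' ((t.den : ℕ) : ℤ) t.num
    simpa using Int.natAbs_dvd_natAbs.mpr h2
  · intro h
    exact hnum ((Int.natCast_dvd_natCast.mpr h).trans (Int.natAbs_dvd.mpr dvd_rfl))

lemma key_identity {K : Type*} [Field K] {x : K} (hx : x ≠ 0) (n N : ℕ) (hn : n < N) :
    ∑ k ∈ Finset.range N, (n.choose k : K) ^ 2 * x ^ k
      = x ^ n * ∑ k ∈ Finset.range N, (n.choose k : K) ^ 2 * (x⁻¹) ^ k := by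
  have hsub : Finset.range (n + 1) ⊆ Finset.range N := Finset.range_subset_range.mpr hn
  have hvanish : ∀ g : ℕ → K, ∀ k ∈ Finset.range N, k ∉ Finset.range (n + 1) →
      (n.choose k : K) ^ 2 * g k = 0 := by
    intro g k _ hk
    rw [Nat.choose_eq_zero_of_lt (by simpa using hk)]
    simp
  rw [← Finset.sum_subset hsub (hvanish _), ← Finset.sum_subset hsub (hvanish _),
    Finset.mul_sum,
    ← Finset.sum_range_reflect (fun j => (n.choose j : K) ^ 2 * x ^ j) (n + 1)]
  refine Finset.sum_congr rfl fun k hk => ?_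
  have hk' : k ≤ n := Nat.lt_succ_iff.mp (Finset.mem_range.mp hk)
  simp only [Nat.add_sub_cancel]
  rw [Nat.choose_symm hk', pow_sub₀ x hx hk', inv_pow]
  field_simp

end Aux

theorem sum_gchoose_sq_congr (p : ℕ) (hp : p.Prime) (hodd : Odd p)
    (a t : ℚ) (ha : pInt p a) (ht : pInt p t)
    (ht0 : ¬ pCong p t 0) (ht1 : ¬ pCong p t 1)
    (n : ℕ) (hn : n < p) (han : pCong p a n) :
    pCong p (∑ k ∈ Finset.range p, gchoose a k ^ 2 * t ^ k)
      (t ^ n * ∑ k ∈ Finset.range p, gchoose a k ^ 2 * (1 / t) ^ k) := by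
  haveI : Fact p.Prime := ⟨hp⟩
  have h0int : pInt p (0 : ℚ) := by simpa using pInt_natCast (p := p) 0
  have ht0' : (t : ZMod p) ≠ 0 := by
    intro h
    exact ht0 ((pCong_iff ht h0int).mpr (by rw [h, Rat.cast_zero]))
  have hinv : pInt p ((1 : ℚ) / t) := pInt_one_div ht0'
  have hca : (a : ZMod p) = (n : ZMod p) := by
    have := (pCong_iff ha (pInt_natCast n)).mp han
    rwa [Rat.cast_natCast] at this
  have hLint : pInt p (∑ k ∈ Finset.range p, gchoose a k ^ 2 * t ^ k) :=
    pInt_sum fun k hk =>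
      ((pInt_gchoose ha (Finset.mem_range.mp hk)).pow 2).mul (ht.pow k)
  have hSint : pInt p (∑ k ∈ Finset.range p, gchoose a k ^ 2 * (1 / t) ^ k) :=
    pInt_sum fun k hk =>
      ((pInt_gchoose ha (Finset.mem_range.mp hk)).pow 2).mul (hinv.pow k)
  have hRint : pInt p (t ^ n * ∑ k ∈ Finset.range p, gchoose a k ^ 2 * (1 / t) ^ k) :=
    (ht.pow n).mul hSint
  rw [pCong_iff hLint hRint]
  have hL : ((∑ k ∈ Finset.range p, gchoose a k ^ 2 * t ^ k : ℚ) : ZMod p)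
      = ∑ k ∈ Finset.range p, (n.choose k : ZMod p) ^ 2 * (t : ZMod p) ^ k := by
    rw [cast_sum' fun k hk =>
      ((pInt_gchoose ha (Finset.mem_range.mp hk)).pow 2).mul (ht.pow k)]
    refine Finset.sum_congr rfl fun k hk => ?_
    rw [cast_mul' ((pInt_gchoose ha (Finset.mem_range.mp hk)).pow 2) (ht.pow k),
      cast_pow' (pInt_gchoose ha (Finset.mem_range.mp hk)), cast_pow' ht,
      cast_gchoose ha hca (Finset.mem_range.mp hk)]
  have hR : ((t ^ n * ∑ k ∈ Finset.range p, gchoose a k ^ 2 * (1 / t) ^ k : ℚ) : ZMod p)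
      = (t : ZMod p) ^ n *
        ∑ k ∈ Finset.range p, (n.choose k : ZMod p) ^ 2 * ((t : ZMod p)⁻¹) ^ k := by
    rw [cast_mul' (ht.pow n) hSint, cast_pow' ht,
      cast_sum' fun k hk =>
        ((pInt_gchoose ha (Finset.mem_range.mp hk)).pow 2).mul (hinv.pow k)]
    congr 1
    refine Finset.sum_congr rfl fun k hk => ?_
    rw [cast_mul' ((pInt_gchoose ha (Finset.mem_range.mp hk)).pow 2) (hinv.pow k),
      cast_pow' (pInt_gchoose ha (Finset.mem_range.mp hk)), cast_pow' hinv,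
      cast_gchoose ha hca (Finset.mem_range.mp hk), cast_one_div ht0']
  rw [hL, hR]
  exact key_identity ht0' n p hn
end
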